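/- arXiv:2002.01498 — 2 statements merged into one kernel-verified Lean document; each statement's English description precedes it below -/
import Mathlib

section
/- Let F be a k-regular graph on r vertices and H an n-vertex blow-up of F all of whose vertex classes have size at least x. If |N(Z)| ≤ s for every vertex class Z of H, then e(H) ≤ ns/2 − x(rs − kn)/2. -/
open Finset

/-- The blow-up of a graph `F` with class sizes given by `w`. -/
def SimpleGraph.blowup {α : Type*} (F : SimpleGraph α) (w : α → ℕ) :
    SimpleGraph (Σ a, Fin (w a)) where
  Adj x y := F.Adj x.1 y.1
  symm := ⟨fun _ _ h => F.adj_symm h⟩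
  loopless := ⟨fun x h => F.irrefl h⟩

open scoped Classical in
theorem blowup_degree {α : Type*} [Fintype α] (F : SimpleGraph α) (w : α → ℕ)
    (v : Σ a, Fin (w a)) :
    (F.blowup w).degree v = ∑ b ∈ F.neighborFinset v.1, w b := by
  classical
  rw [← SimpleGraph.card_neighborFinset_eq_degree]
  have h1 : (F.blowup w).neighborFinset v
      = (F.neighborFinset v.1).sigma (fun b => (univ : Finset (Fin (w b)))) := by
    ext y
    rw [SimpleGraph.mem_neighborFinset, Finset.mem_sigma]
    simp [SimpleGraph.blowup, SimpleGraph.mem_neighborFinset]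
  rw [h1, Finset.card_sigma]
  simp

open scoped Classical in
/-- If `F` is `k`-regular on `r` vertices and `H` is an `n`-vertex blow-up of `F`
whose vertex classes all have size at least `x` and satisfy `|N(Z)| ≤ s`, then
`e(H) ≤ ns/2 - x(rs - kn)/2`. -/
theorem stmt_3 {α : Type*} [Fintype α] (F : SimpleGraph α) (k r : ℕ)
    (hreg : F.IsRegularOfDegree k) (hr : Fintype.card α = r)
    (w : α → ℕ) (n s x : ℕ) (hn : n = ∑ a, w a)
    (hx : ∀ a, x ≤ w a)
    (hs : ∀ a, ∑ b ∈ F.neighborFinset a, w b ≤ s) :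
    (2 * (F.blowup w).edgeFinset.card : ℤ) ≤
      (n : ℤ) * s - (x : ℤ) * ((r : ℤ) * s - (k : ℤ) * n) := by
  classical
  -- 2e(H) = Σ_a w a * d a  where  d a = Σ_{b ∈ N(a)} w b
  have key : 2 * (F.blowup w).edgeFinset.card
      = ∑ a, w a * ∑ b ∈ F.neighborFinset a, w b := by
    rw [← SimpleGraph.sum_degrees_eq_twice_card_edges, ← Finset.univ_sigma_univ,
      Finset.sum_sigma]
    simp [blowup_degree, mul_comm]
    refine Finset.sum_congr rfl fun a _ => ?_
    rw [Finset.sum_const_nat (m := ∑ b ∈ F.neighborFinset a, w b) fun _ _ => rfl]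
    simp
  -- Σ_a d a = k * n
  have hsum : ∑ a, ∑ b ∈ F.neighborFinset a, w b = k * n := by
    have : ∑ a, ∑ b ∈ F.neighborFinset a, w b
        = ∑ b, (F.neighborFinset b).card * w b := by
      simp_rw [SimpleGraph.neighborFinset_eq_filter, Finset.sum_filter]
      rw [Finset.sum_comm]
      congr 1
      ext b
      rw [Finset.card_filter, Finset.sum_mul]
      congr 1
      ext a
      simp [SimpleGraph.adj_comm, ite_mul]
    rw [this, hn, Finset.mul_sum]
    congr 1
    ext b
    rw [SimpleGraph.card_neighborFinset_eq_degree, hreg b]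
  -- main estimate in ℤ
  have keyZ : (2 * (F.blowup w).edgeFinset.card : ℤ)
      = ∑ a, (w a : ℤ) * ∑ b ∈ F.neighborFinset a, (w b : ℤ) := by
    exact_mod_cast key
  rw [keyZ]
  have h1 : ∀ a : α, ((w a : ℤ) - x) * (∑ b ∈ F.neighborFinset a, (w b : ℤ))
      ≤ ((w a : ℤ) - x) * s := fun a => by
    apply mul_le_mul_of_nonneg_left
    · exact_mod_cast hs a
    · have := hx a; omega
  have h2 : ∑ a, ((w a : ℤ) - x) * (∑ b ∈ F.neighborFinset a, (w b : ℤ))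
      ≤ ∑ a, ((w a : ℤ) - x) * s := Finset.sum_le_sum fun a _ => h1 a
  have e1 : ∑ a, ((w a : ℤ) - x) * (∑ b ∈ F.neighborFinset a, (w b : ℤ))
      = (∑ a, (w a : ℤ) * ∑ b ∈ F.neighborFinset a, (w b : ℤ)) - (x : ℤ) * (k * n) := by
    have : ((∑ a, ∑ b ∈ F.neighborFinset a, w b : ℕ) : ℤ) = ((k * n : ℕ) : ℤ) := by
      rw [hsum]
    push_cast at this
    simp_rw [sub_mul, Finset.sum_sub_distrib, ← Finset.mul_sum, this]
  have e2 : ∑ a, ((w a : ℤ) - x) * s = ((n : ℤ) - r * x) * s := by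
    rw [← Finset.sum_mul, Finset.sum_sub_distrib]
    simp [hn, ← hr, Finset.card_univ, mul_comm]
  rw [e1, e2] at h2
  nlinarith [h2]
end

section
/- For every integer k ≥ 2, every independent set of the Andrásfai graph Γ_k is contained in the neighbourhood of some vertex of Γ_k; in particular the independence number of Γ_k equals k. -/
open Finset

/-- The Andrásfai graph `Γ_k`: vertices `0, ..., 3k-2`, with `i` adjacent to `j`
iff the cyclic difference of `i` and `j` modulo `3k-1` lies in `{k, ..., 2k-1}`. -/
def andrasfai (k : ℕ) : SimpleGraph (Fin (3 * k - 1)) where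
  Adj i j := i ≠ j ∧
    ((i.val + (3 * k - 1) - j.val) % (3 * k - 1) ∈ Finset.Icc k (2 * k - 1) ∨
     (j.val + (3 * k - 1) - i.val) % (3 * k - 1) ∈ Finset.Icc k (2 * k - 1))
  symm := ⟨fun _ _ h => ⟨h.1.symm, h.2.symm⟩⟩
  loopless := ⟨fun _ h => h.1 rfl⟩

/-- Cyclic difference `x - y` in `Fin (3k-1)`, as a natural number. -/
def dd (k : ℕ) (x y : Fin (3 * k - 1)) : ℕ :=
  if y.val ≤ x.val then x.val - y.val else x.val + (3 * k - 1) - y.val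

lemma dd_lt {k : ℕ} (x y : Fin (3 * k - 1)) : dd k x y < 3 * k - 1 := by
  have hx := x.isLt; have hy := y.isLt
  unfold dd; split <;> omega

lemma dd_mod {k : ℕ} (x y : Fin (3 * k - 1)) :
    (x.val + (3 * k - 1) - y.val) % (3 * k - 1) = dd k x y := by
  have hx := x.isLt; have hy := y.isLt
  unfold dd
  split
  · next h =>
    have h1 : x.val + (3 * k - 1) - y.val = (x.val - y.val) + (3 * k - 1) := by omega
    rw [h1, Nat.add_mod_right]
    exact Nat.mod_eq_of_lt (by omega)
  · exact Nat.mod_eq_of_lt (by omega)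

lemma dd_eq_zero_iff {k : ℕ} (x y : Fin (3 * k - 1)) : dd k x y = 0 ↔ x = y := by
  have hx := x.isLt; have hy := y.isLt
  rw [Fin.ext_iff]
  unfold dd; split <;> omega

lemma dd_add_dd {k : ℕ} (x y : Fin (3 * k - 1)) (h : x ≠ y) :
    dd k x y + dd k y x = 3 * k - 1 := by
  have hx := x.isLt; have hy := y.isLt
  have hne : x.val ≠ y.val := fun h' => h (Fin.ext h')
  unfold dd; split <;> split <;> omega

lemma dd_triangle {k : ℕ} (x y z : Fin (3 * k - 1)) :
    dd k x y + dd k y z = dd k x z ∨ dd k x y + dd k y z = dd k x z + (3 * k - 1) := by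
  have hx := x.isLt; have hy := y.isLt; have hz := z.isLt
  unfold dd; split <;> split <;> split <;> omega

lemma dd_right_inj {k : ℕ} {x y z : Fin (3 * k - 1)} (h : dd k x z = dd k y z) : x = y := by
  have hx := x.isLt; have hy := y.isLt; have hz := z.isLt
  apply Fin.ext
  unfold dd at h
  split at h <;> split at h <;> omega

lemma adj_iff {k : ℕ} (hk : 2 ≤ k) (x y : Fin (3 * k - 1)) :
    (andrasfai k).Adj x y ↔ k ≤ dd k x y ∧ dd k x y ≤ 2 * k - 1 := by
  have hlt := dd_lt x y
  have hlt' := dd_lt y x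
  have hz := dd_eq_zero_iff x y
  constructor
  · rintro ⟨hne, h | h⟩
    · rw [Finset.mem_Icc, dd_mod] at h; exact h
    · rw [Finset.mem_Icc, dd_mod] at h
      have hadd := dd_add_dd x y hne
      omega
  · intro h
    have hne : x ≠ y := by
      intro he
      have := hz.mpr he
      omega
    exact ⟨hne, Or.inl (by rw [Finset.mem_Icc, dd_mod]; exact h)⟩

lemma dd_of_val {k : ℕ} (a w : Fin (3 * k - 1)) (c : ℕ) (hc : c < 3 * k - 1)
    (h : w.val = (a.val + (3 * k - 1) - c) % (3 * k - 1)) : dd k a w = c := by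
  have ha := a.isLt; have hw := w.isLt
  have hval : w.val = if c ≤ a.val then a.val - c else a.val + (3 * k - 1) - c := by
    rw [h]; split
    · next hca =>
      have h1 : a.val + (3 * k - 1) - c = (a.val - c) + (3 * k - 1) := by omega
      rw [h1, Nat.add_mod_right]
      exact Nat.mod_eq_of_lt (by omega)
    · exact Nat.mod_eq_of_lt (by omega)
  unfold dd
  split at hval <;> (split <;> omega)

lemma indep_subset_nbhd {k : ℕ} (hk : 2 ≤ k) (S : Set (Fin (3 * k - 1)))
    (hS : ∀ a ∈ S, ∀ b ∈ S, ¬ (andrasfai k).Adj a b) :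
    ∃ v, S ⊆ (andrasfai k).neighborSet v := by
  rcases S.eq_empty_or_nonempty with rfl | ⟨a, ha⟩
  · exact ⟨⟨0, by omega⟩, by simp⟩
  classical
  set ee : Fin (3 * k - 1) → ℕ :=
    fun s => if dd k a s ≤ k - 1 then (k - 1) - dd k a s else (k - 1) + dd k s a with hee
  have hprof : ∀ s ∈ S,
      (ee s ≤ k - 1 ∧ dd k a s = (k - 1) - ee s ∧ dd k a s ≤ k - 1) ∨
      (k ≤ ee s ∧ ee s ≤ 2 * k - 2 ∧ dd k s a = ee s - (k - 1)) := by
    intro s hs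
    have h1 : ¬ (k ≤ dd k a s ∧ dd k a s ≤ 2 * k - 1) :=
      fun hc => hS a ha s hs ((adj_iff hk a s).2 hc)
    have h2 : ¬ (k ≤ dd k s a ∧ dd k s a ≤ 2 * k - 1) :=
      fun hc => hS s hs a ha ((adj_iff hk s a).2 hc)
    have hlt := dd_lt (k := k) a s
    have hlt' := dd_lt (k := k) s a
    have hadd : (dd k a s = 0 ∧ dd k s a = 0) ∨ dd k a s + dd k s a = 3 * k - 1 := by
      by_cases h : a = s
      · exact Or.inl ⟨(dd_eq_zero_iff a s).2 h, (dd_eq_zero_iff s a).2 h.symm⟩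
      · exact Or.inr (dd_add_dd a s h)
    rw [hee]
    simp only []
    split <;> omega
  have hgap : ∀ s ∈ S, ∀ t ∈ S, ee t ≤ ee s + (k - 1) := by
    intro s hs t ht
    by_contra hcon
    push_neg at hcon
    rcases hprof s hs with ⟨hs1, hs2, hs3⟩ | ⟨hs1, hs2, hs3⟩ <;>
      rcases hprof t ht with ⟨ht1, ht2, ht3⟩ | ⟨ht1, ht2, ht3⟩
    · omega
    · -- main case: s branch1, t branch2
      rcases dd_triangle t a s with h | h
      · refine hS t ht s hs ((adj_iff hk t s).2 ?_)
        omega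
      · have hlt := dd_lt (k := k) t s
        omega
    · omega
    · omega
  obtain ⟨s₀, hs₀T, hmin⟩ := Finset.exists_min_image (Set.toFinite S).toFinset ee
    ⟨a, (Set.Finite.mem_toFinset _).2 ha⟩
  rw [Set.Finite.mem_toFinset] at hs₀T
  set m := ee s₀ with hm
  have hm2 : m ≤ 2 * k - 2 := by rcases hprof s₀ hs₀T with h | h <;> omega
  have hn : 0 < 3 * k - 1 := by omega
  refine ⟨⟨(a.val + (3 * k - 1) - (2 * k - 1 - m)) % (3 * k - 1), Nat.mod_lt _ hn⟩, ?_⟩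
  set v : Fin (3 * k - 1) := ⟨(a.val + (3 * k - 1) - (2 * k - 1 - m)) % (3 * k - 1),
    Nat.mod_lt _ hn⟩ with hvdef
  have hav : dd k a v = 2 * k - 1 - m := dd_of_val a v (2 * k - 1 - m) (by omega) rfl
  intro s hs
  have hmins : m ≤ ee s := hmin s ((Set.Finite.mem_toFinset _).2 hs)
  have hgaps : ee s ≤ m + (k - 1) := hgap s₀ hs₀T s hs
  have hlt1 := dd_lt (k := k) s v
  rw [SimpleGraph.mem_neighborSet]
  rcases hprof s hs with ⟨h1, h2, h3⟩ | ⟨h1, h2, h3⟩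
  · rcases dd_triangle a s v with h | h
    · exact ((adj_iff hk s v).2 (by omega)).symm
    · omega
  · rcases dd_triangle s a v with h | h
    · exact ((adj_iff hk s v).2 (by omega)).symm
    · omega

/-- For k ≥ 2, every independent set of Γ_k is contained in the neighbourhood
of some vertex; in particular the independence number of Γ_k equals k. -/
theorem stmt_9 (k : ℕ) (hk : 2 ≤ k) :
    (∀ S : Set (Fin (3 * k - 1)),
        (∀ a ∈ S, ∀ b ∈ S, ¬ (andrasfai k).Adj a b) →
        ∃ v, S ⊆ (andrasfai k).neighborSet v) ∧
      (∃ S : Finset (Fin (3 * k - 1)),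
          (∀ a ∈ S, ∀ b ∈ S, ¬ (andrasfai k).Adj a b) ∧ S.card = k) ∧
      (∀ S : Finset (Fin (3 * k - 1)),
          (∀ a ∈ S, ∀ b ∈ S, ¬ (andrasfai k).Adj a b) → S.card ≤ k) := by
  refine ⟨indep_subset_nbhd hk, ⟨?_, ?_⟩⟩
  · -- explicit independent set of size k : the arc {k, ..., 2k-1}
    refine ⟨Finset.image (fun i : Fin k =>
      (⟨k + i.val, by have := i.isLt; omega⟩ : Fin (3 * k - 1))) Finset.univ, ?_, ?_⟩
    · intro x hx y hy
      simp only [Finset.mem_image, Finset.mem_univ, true_and] at hx hy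
      obtain ⟨i, rfl⟩ := hx
      obtain ⟨j, rfl⟩ := hy
      rw [adj_iff hk]
      have hi := i.isLt; have hj := j.isLt
      unfold dd
      split <;> simp only [Fin.val_mk] <;> omega
    · rw [Finset.card_image_of_injective _ ?_, Finset.card_univ, Fintype.card_fin]
      intro i j h
      have h' : k + i.val = k + j.val := congrArg Fin.val h
      exact Fin.ext (by omega)
  · intro S hS
    obtain ⟨v, hv⟩ := indep_subset_nbhd hk (↑S : Set (Fin (3 * k - 1)))
      (fun x hx y hy => hS x (by simpa using hx) y (by simpa using hy))
    have hcard : S.card ≤ (Finset.Icc k (2 * k - 1)).card := by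
      apply Finset.card_le_card_of_injOn (fun s => dd k s v)
      · intro s hsS
        have hadj : (andrasfai k).Adj v s := hv (by simpa using hsS)
        have h1 := (adj_iff hk v s).1 hadj
        have hadd := dd_add_dd v s hadj.ne
        simp only [Finset.mem_coe, Finset.mem_Icc]
        omega
      · intro s _ t _ h
        exact dd_right_inj h
    rw [Nat.card_Icc] at hcard
    omega
end
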